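/- Let α, β ∈ ℂ satisfy α² ∉ {0,1}, β² ∉ {0,1}, α² ≠ β², and α²β² ≠ 1. If (x, y) ∈ ℂ² satisfies y² = x(x−1)(x−α²)(x−β²)(x−α²β²) and x ≠ αβ, then the point (X, Y) with X = (α−β)²x/(x−αβ)² and Y = (α−β)²y/((αβ−1)(x−αβ)³) satisfies Y² = X(X−1)(X − (α−β)²/(αβ−1)²). -/

import Mathlib

set_option maxHeartbeats 1000000 in
theorem stmt_0 (α β x y : ℂ)
    (hα0 : α^2 ≠ 0) (hα1 : α^2 ≠ 1) (hβ0 : β^2 ≠ 0) (hβ1 : β^2 ≠ 1)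
    (hαβ : α^2 ≠ β^2) (hαβ1 : α^2 * β^2 ≠ 1)
    (hV : y^2 = x * (x - 1) * (x - α^2) * (x - β^2) * (x - α^2 * β^2))
    (hx : x ≠ α * β) :
    ((α - β)^2 * y / ((α * β - 1) * (x - α * β)^3))^2 =
      ((α - β)^2 * x / (x - α * β)^2) *
      ((α - β)^2 * x / (x - α * β)^2 - 1) *
      ((α - β)^2 * x / (x - α * β)^2 - (α - β)^2 / (α * β - 1)^2) := by
  have h1 : α * β - 1 ≠ 0 := by
    intro h
    apply hαβ1
    have h2 : α * β = 1 := by linear_combination h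
    linear_combination (α * β + 1) * h2
  have h2 : x - α * β ≠ 0 := sub_ne_zero.mpr hx
  field_simp
  linear_combination (α - β)^4 * hV
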